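/- Let κ be an uncountable regular cardinal with 2^{<κ} > κ (i.e., 2^λ > κ for some cardinal λ < κ). Then add(𝓜_κ) = cov(𝓜_κ) = κ⁺. -/

import Mathlib

namespace GenCichon

noncomputable section

open Cardinal Set Ordinal

variable (κ : Cardinal.{0})

/-- The ordinals below `κ`, i.e. the cardinal `κ` viewed as a set of ordinals. -/
abbrev Idx : Type 1 := ↥(Set.Iio κ.ord)

/-- The generalized Cantor space `2^κ`. -/
abbrev GenCantor : Type 1 := Idx κ → Bool

/-- The generalized Baire space `κ^κ`. -/
abbrev GenBaire : Type 1 := Idx κ → Idx κ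

/-- The basic open (cylinder) set `[σ]` determined by the element `σ` of `2^{<κ}`
with domain `[0, δ)` (values of `σ` at or above `δ` are irrelevant). -/
def cyl (δ : Ordinal) (σ : Ordinal → Bool) : Set (GenCantor κ) :=
  { x | ∀ β : Idx κ, β.1 < δ → x β = σ β.1 }

/-- `A ⊆ 2^κ` is nowhere dense: every basic open set `[σ]`, `σ ∈ 2^{<κ}`, has a
basic open refinement `[σ'] ⊆ [σ]` disjoint from `A`. -/
def IsNwd (A : Set (GenCantor κ)) : Prop :=
  ∀ δ < κ.ord, ∀ σ : Ordinal → Bool, ∃ δ', δ ≤ δ' ∧ δ' < κ.ord ∧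
    ∃ σ' : Ordinal → Bool, (∀ β < δ, σ' β = σ β) ∧ cyl κ δ' σ' ∩ A = ∅

/-- `A ⊆ 2^κ` is `κ`-meager: a union of `κ` many nowhere dense sets. -/
def IsKMeager (A : Set (GenCantor κ)) : Prop :=
  ∃ B : Idx κ → Set (GenCantor κ), (∀ i, IsNwd κ (B i)) ∧ A = ⋃ i, B i

/-- The covering number of the `κ`-meager ideal. -/
def covM : Cardinal.{1} :=
  sInf { c : Cardinal.{1} | ∃ J : Set (Set (GenCantor κ)),
    (∀ A ∈ J, IsKMeager κ A) ∧ ⋃₀ J = Set.univ ∧ c = #J }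

/-- The uniformity number of the `κ`-meager ideal. -/
def nonM : Cardinal.{1} :=
  sInf { c : Cardinal.{1} | ∃ X : Set (GenCantor κ), ¬ IsKMeager κ X ∧ c = #X }

/-- The additivity number of the `κ`-meager ideal. -/
def addM : Cardinal.{1} :=
  sInf { c : Cardinal.{1} | ∃ J : Set (Set (GenCantor κ)),
    (∀ A ∈ J, IsKMeager κ A) ∧ ¬ IsKMeager κ (⋃₀ J) ∧ c = #J }

/-- The cofinality number of the `κ`-meager ideal. -/
def cofM : Cardinal.{1} :=
  sInf { c : Cardinal.{1} | ∃ J : Set (Set (GenCantor κ)),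
    (∀ A ∈ J, IsKMeager κ A) ∧ (∀ A, IsKMeager κ A → ∃ B ∈ J, A ⊆ B) ∧ c = #J }

/-- `g` eventually dominates `f` (`f <* g`). -/
def EvDom (f g : GenBaire κ) : Prop :=
  ∃ α : Idx κ, ∀ β : Idx κ, α < β → f β < g β

/-- The unbounding number `𝔟_κ`. -/
def bK : Cardinal.{1} :=
  sInf { c : Cardinal.{1} | ∃ F : Set (GenBaire κ),
    (∀ g : GenBaire κ, ∃ f ∈ F, ¬ EvDom κ f g) ∧ c = #F }

/-- The dominating number `𝔡_κ`. -/
def dK : Cardinal.{1} :=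
  sInf { c : Cardinal.{1} | ∃ F : Set (GenBaire κ),
    (∀ g : GenBaire κ, ∃ f ∈ F, EvDom κ g f) ∧ c = #F }

/-- `f` and `g` are eventually different (`f ≠* g`). -/
def EvDiff (f g : GenBaire κ) : Prop :=
  #{ α : Idx κ | f α = g α } < Cardinal.lift.{1} κ

/-- `𝔟_κ(≠*)`: least size of a family such that every `g` is cofinally matching
with some member of it. -/
def bNeq : Cardinal.{1} :=
  sInf { c : Cardinal.{1} | ∃ F : Set (GenBaire κ),
    (∀ g : GenBaire κ, ∃ f ∈ F, ¬ EvDiff κ f g) ∧ c = #F }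

/-- `𝔡_κ(≠*)`: least size of a family such that every `g` is eventually different
from some member of it. -/
def dNeq : Cardinal.{1} :=
  sInf { c : Cardinal.{1} | ∃ F : Set (GenBaire κ),
    (∀ g : GenBaire κ, ∃ f ∈ F, EvDiff κ f g) ∧ c = #F }

/-- An interval partition of `κ`: a strictly increasing continuous sequence
`(pts α : α < κ)` of ordinals below `κ` with `pts 0 = 0`; the `α`-th interval is
`[pts α, pts (α+1))`.  (Values at or above `κ` are normalized to `0`, so that an
interval partition is determined by its restriction below `κ`.) -/
structure IntervalPartition where
  pts : Ordinal → Ordinal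
  zero : pts 0 = 0
  lt_ord : ∀ α < κ.ord, pts α < κ.ord
  strictMono : ∀ α β : Ordinal, α < β → β < κ.ord → pts α < pts β
  isCont : ∀ δ < κ.ord, Order.IsSuccLimit δ → pts δ = ⨆ β : ↥(Set.Iio δ), pts β.1
  eq_zero_of_le : ∀ α, κ.ord ≤ α → pts α = 0

/-- The `β`-th interval of `J` is included in the `α`-th interval of `I`. -/
def SubIntv (J : IntervalPartition κ) (β : Ordinal) (I : IntervalPartition κ)
    (α : Ordinal) : Prop :=
  I.pts α ≤ J.pts β ∧ J.pts (β + 1) ≤ I.pts (α + 1)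

/-- `I` dominates `J` (`J ≤* I`): from some point on, every interval of `I`
contains an interval of `J`. -/
def IPDom (J I : IntervalPartition κ) : Prop :=
  ∃ γ < κ.ord, ∀ α, γ < α → α < κ.ord → ∃ β < κ.ord, SubIntv κ J β I α

/-- `y` matches the `κ`-chopped function `(x, I)`: `y` and `x` agree on cofinally
many intervals of `I`. -/
def Matches (y x : GenCantor κ) (I : IntervalPartition κ) : Prop :=
  ∀ γ < κ.ord, ∃ α, γ ≤ α ∧ α < κ.ord ∧
    ∀ β : Idx κ, I.pts α ≤ β.1 → β.1 < I.pts (α + 1) → y β = x β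

/-- The set of elements of `2^κ` matching the `κ`-chopped function `(x, I)`. -/
def MatchSet (x : GenCantor κ) (I : IntervalPartition κ) : Set (GenCantor κ) :=
  { y | Matches κ y x I }

/-- `h ∈ κ^κ` tends to `κ`: `lim_{α → κ} h(α) = κ`. -/
def TendsToTop (h : GenBaire κ) : Prop :=
  ∀ γ : Idx κ, ∃ α : Idx κ, ∀ β : Idx κ, α ≤ β → γ ≤ h β

/-- `φ` is an `h`-slalom: `φ(α)` is a subset of `κ` of cardinality `|h(α)|`. -/
def IsSlalom (h : GenBaire κ) (φ : Idx κ → Set (Idx κ)) : Prop :=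
  ∀ α : Idx κ, #(φ α) = Cardinal.lift.{1} (h α).1.card

/-- The (total) slalom `φ` localizes `f` (`f ∈* φ`). -/
def Localizes (φ : Idx κ → Set (Idx κ)) (f : GenBaire κ) : Prop :=
  #{ α : Idx κ | f α ∉ φ α } < Cardinal.lift.{1} κ

/-- `𝔟_h(∈*)`. -/
def bLoc (h : GenBaire κ) : Cardinal.{1} :=
  sInf { c : Cardinal.{1} | ∃ F : Set (GenBaire κ),
    (∀ φ : Idx κ → Set (Idx κ), IsSlalom κ h φ → ∃ f ∈ F, ¬ Localizes κ φ f) ∧ c = #F }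

/-- `𝔡_h(∈*)`. -/
def dLoc (h : GenBaire κ) : Cardinal.{1} :=
  sInf { c : Cardinal.{1} | ∃ Φ : Set (Idx κ → Set (Idx κ)),
    (∀ φ ∈ Φ, IsSlalom κ h φ) ∧ (∀ f : GenBaire κ, ∃ φ ∈ Φ, Localizes κ φ f) ∧ c = #Φ }

/-- A partial `h`-slalom: a slalom whose domain is a subset of `κ` of cardinality `κ`.
(The values outside the domain are normalized to `∅`.) -/
structure PartialSlalom (h : GenBaire κ) where
  dom : Set (Idx κ)
  dom_card : #dom = Cardinal.lift.{1} κ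
  fn : Idx κ → Set (Idx κ)
  fn_card : ∀ α ∈ dom, #(fn α) = Cardinal.lift.{1} (h α).1.card
  eq_empty_of_not_mem : ∀ α ∉ dom, fn α = ∅

/-- The partial slalom `φ` localizes `f` (`f ∈* φ`). -/
def PLocalizes {h : GenBaire κ} (φ : PartialSlalom κ h) (f : GenBaire κ) : Prop :=
  #{ α : Idx κ | α ∈ φ.dom ∧ f α ∉ φ.fn α } < Cardinal.lift.{1} κ

/-- `𝔟_h(p∈*)`. -/
def bPLoc (h : GenBaire κ) : Cardinal.{1} :=
  sInf { c : Cardinal.{1} | ∃ F : Set (GenBaire κ),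
    (∀ φ : PartialSlalom κ h, ∃ f ∈ F, ¬ PLocalizes κ φ f) ∧ c = #F }

/-- `𝔡_h(p∈*)`. -/
def dPLoc (h : GenBaire κ) : Cardinal.{1} :=
  sInf { c : Cardinal.{1} | ∃ Φ : Set (PartialSlalom κ h),
    (∀ f : GenBaire κ, ∃ φ ∈ Φ, PLocalizes κ φ f) ∧ c = #Φ }

/-- `X ⊆ 2^κ` is open in the `<κ`-box topology. -/
def IsOpenK (X : Set (GenCantor κ)) : Prop :=
  ∀ x ∈ X, ∃ δ < κ.ord, { y : GenCantor κ | ∀ β : Idx κ, β.1 < δ → y β = x β } ⊆ X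

/-- `X ⊆ 2^κ` is dense: it meets every basic open set. -/
def IsDenseK (X : Set (GenCantor κ)) : Prop :=
  ∀ δ < κ.ord, ∀ σ : Ordinal → Bool, (cyl κ δ σ ∩ X).Nonempty

/-- Coordinatewise addition modulo 2 on `2^κ`. -/
def addMod2 (x y : GenCantor κ) : GenCantor κ := fun α => Bool.xor (x α) (y α)

/-- The identification of `σ ∈ 2^{<κ}` (with domain `[0, δ)`) with the element of
`2^κ` extending `σ` by `0`'s. -/
def extendZero (δ : Ordinal) (σ : Ordinal → Bool) : GenCantor κ :=
  fun α => if α.1 < δ then σ α.1 else false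

end

end GenCichon

namespace GenCichon

open Cardinal Set Ordinal

noncomputable section Helpers

variable (κ : Cardinal.{0})

lemma isNwd_empty : IsNwd κ ∅ := by
  intro δ hδ σ
  exact ⟨δ, le_rfl, hδ, σ, fun _ _ => rfl, by simp⟩

lemma ord_pos (hunc : Cardinal.aleph0 < κ) : (0 : Ordinal) < κ.ord := by
  rw [Cardinal.lt_ord]
  simpa using aleph0_pos.trans hunc

lemma mk_Idx : #(Idx κ) = Cardinal.lift.{1} κ := by
  rw [Ordinal.mk_Iio_ordinal, Cardinal.card_ord]

lemma isKMeager_empty : IsKMeager κ ∅ :=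
  ⟨fun _ => ∅, fun _ => isNwd_empty κ, by simp⟩

lemma isKMeager_iUnion (hunc : Cardinal.aleph0 < κ) (B : Idx κ → Set (GenCantor κ))
    (hB : ∀ i, IsKMeager κ (B i)) : IsKMeager κ (⋃ i, B i) := by
  choose C hC hBC using hB
  have hmk : #(Idx κ × Idx κ) = #(Idx κ) := by
    rw [Cardinal.mk_prod, Cardinal.lift_id, mk_Idx,
      Cardinal.mul_eq_self (Cardinal.aleph0_le_lift.2 hunc.le)]
  obtain ⟨e⟩ := Cardinal.eq.1 hmk.symm
  refine ⟨fun k => C (e k).1 (e k).2, fun k => hC _ _, ?_⟩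
  ext x
  simp only [Set.mem_iUnion]
  constructor
  · rintro ⟨i, hx⟩
    rw [hBC i] at hx
    obtain ⟨j, hx⟩ := Set.mem_iUnion.1 hx
    exact ⟨e.symm (i, j), by simpa using hx⟩
  · rintro ⟨k, hx⟩
    refine ⟨(e k).1, ?_⟩
    rw [hBC]
    exact Set.mem_iUnion.2 ⟨(e k).2, hx⟩

lemma isKMeager_sUnion (hunc : Cardinal.aleph0 < κ) (J : Set (Set (GenCantor κ)))
    (hJ : ∀ A ∈ J, IsKMeager κ A) (hcard : #J ≤ Cardinal.lift.{1} κ) :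
    IsKMeager κ (⋃₀ J) := by
  rcases J.eq_empty_or_nonempty with rfl | hne
  · simpa using isKMeager_empty κ
  · have : Nonempty J := hne.to_subtype
    rw [← mk_Idx] at hcard
    obtain ⟨f⟩ := (Cardinal.le_def _ _).1 hcard
    have hsurj : Function.Surjective (Function.invFun (⇑f)) :=
      Function.invFun_surjective f.injective
    have hU : ⋃₀ J = ⋃ i : Idx κ, ((Function.invFun (⇑f) i : J) : Set (GenCantor κ)) := by
      rw [Set.sUnion_eq_iUnion]
      exact (hsurj.iUnion_comp _).symm
    rw [hU]
    exact isKMeager_iUnion κ hunc _ fun i => hJ _ (Function.invFun (⇑f) i).2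

/-- The predicate describing a good choice at stage `α` of the Baire-category
recursion: a condition `(δ', σ')` extending all previous conditions, with
`α < δ' < κ.ord`, whose cylinder avoids `B α`. -/
def GoodCond (B : Ordinal → Set (GenCantor κ)) (α : Ordinal)
    (prev : ∀ β, β < α → Ordinal × (Ordinal → Bool))
    (p : Ordinal × (Ordinal → Bool)) : Prop :=
  p.1 < κ.ord ∧ α < p.1 ∧
  (∀ β (h : β < α), (prev β h).1 ≤ p.1 ∧ ∀ γ < (prev β h).1, p.2 γ = (prev β h).2 γ) ∧
  cyl κ p.1 p.2 ∩ B α = ∅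

/-- The recursively chosen sequence of conditions. -/
noncomputable def gseq (B : Ordinal → Set (GenCantor κ)) :
    Ordinal → Ordinal × (Ordinal → Bool) :=
  Ordinal.lt_wf.fix fun α prev => Classical.epsilon (GoodCond κ B α prev)

lemma gseq_eq (B : Ordinal → Set (GenCantor κ)) (α : Ordinal) :
    gseq κ B α = Classical.epsilon (GoodCond κ B α fun β _ => gseq κ B β) := by
  unfold gseq
  exact WellFounded.fix_eq _ _ _

lemma goodCond_exists (hreg : κ.IsRegular)
    (B : Ordinal → Set (GenCantor κ)) (hB : ∀ α, IsNwd κ (B α))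
    (α : Ordinal) (hα : α < κ.ord)
    (prev : ∀ β, β < α → Ordinal × (Ordinal → Bool))
    (hlt : ∀ β h, (prev β h).1 < κ.ord)
    (hcoh : ∀ β₁ h₁ β₂ h₂, β₁ < β₂ →
      (prev β₁ h₁).1 ≤ (prev β₂ h₂).1 ∧
      ∀ γ < (prev β₁ h₁).1, (prev β₂ h₂).2 γ = (prev β₁ h₁).2 γ) :
    ∃ p, GoodCond κ B α prev p := by
  classical
  have key : ∀ β₁ (h₁ : β₁ < α) β₂ (h₂ : β₂ < α) γ, γ < (prev β₁ h₁).1 →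
      γ < (prev β₂ h₂).1 → (prev β₁ h₁).2 γ = (prev β₂ h₂).2 γ := by
    intro β₁ h₁ β₂ h₂ γ hγ₁ hγ₂
    rcases lt_trichotomy β₁ β₂ with h | h | h
    · exact ((hcoh β₁ h₁ β₂ h₂ h).2 γ hγ₁).symm
    · subst h; rfl
    · exact (hcoh β₂ h₂ β₁ h₁ h).2 γ hγ₂
  set δs : Ordinal := Ordinal.bsup α fun β h => (prev β h).1 with hδsdef
  have hδslt : δs < κ.ord :=
    Ordinal.bsup_lt_ord ((Cardinal.lt_ord.1 hα).trans_le hreg.2) hlt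
  set σs : Ordinal → Bool := fun γ =>
    if h : ∃ β, ∃ hβ : β < α, γ < (prev β hβ).1 then
      (prev h.choose h.choose_spec.choose).2 γ
    else false with hσsdef
  have hσcoh : ∀ β (hβ : β < α), ∀ γ, γ < (prev β hβ).1 → σs γ = (prev β hβ).2 γ := by
    intro β hβ γ hγ
    have hex : ∃ β, ∃ hβ : β < α, γ < (prev β hβ).1 := ⟨β, hβ, hγ⟩
    show (if h : ∃ β, ∃ hβ : β < α, γ < (prev β hβ).1 then
        (prev h.choose h.choose_spec.choose).2 γ else false) = (prev β hβ).2 γ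
    rw [dif_pos hex]
    exact key _ _ _ _ γ hex.choose_spec.choose_spec hγ
  have hα1 : α < α + 1 := by
    rw [Ordinal.add_one_eq_succ]; exact Order.lt_succ α
  have hsucclt : α + 1 < κ.ord := by
    rw [Ordinal.add_one_eq_succ]
    exact (Cardinal.isSuccLimit_ord hreg.aleph0_le).succ_lt hα
  set δ₀ : Ordinal := max δs (α + 1) with hδ₀def
  have hδ₀ : δ₀ < κ.ord := max_lt hδslt hsucclt
  obtain ⟨δ', hle, hδ', σ', hagree, hdisj⟩ := hB α δ₀ hδ₀ σs
  refine ⟨(δ', σ'), hδ', ?_, ?_, hdisj⟩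
  · exact lt_of_lt_of_le (lt_of_lt_of_le hα1 (le_max_right _ _)) hle
  · intro β h
    have hbs : (prev β h).1 ≤ δs := Ordinal.le_bsup _ β h
    refine ⟨hbs.trans ((le_max_left _ _).trans hle), fun γ hγ => ?_⟩
    have hγδ₀ : γ < δ₀ := lt_of_lt_of_le (hγ.trans_le hbs) (le_max_left _ _)
    show σ' γ = (prev β h).2 γ
    rw [hagree γ hγδ₀]
    exact hσcoh β h γ hγ

lemma goodCond_gseq (hreg : κ.IsRegular)
    (B : Ordinal → Set (GenCantor κ)) (hB : ∀ α, IsNwd κ (B α)) :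
    ∀ α < κ.ord, GoodCond κ B α (fun β _ => gseq κ B β) (gseq κ B α) := by
  intro α
  induction α using Ordinal.induction with
  | h α IH =>
    intro hα
    rw [gseq_eq]
    apply Classical.epsilon_spec
    exact goodCond_exists κ hreg B hB α hα _
      (fun β h => (IH β h (h.trans hα)).1)
      (fun β₁ h₁ β₂ h₂ hlt => (IH β₂ h₂ (h₂.trans hα)).2.2.1 β₁ hlt)

lemma exists_avoid (hreg : κ.IsRegular)
    (B : Ordinal → Set (GenCantor κ)) (hB : ∀ α, IsNwd κ (B α)) :
    ∃ x : GenCantor κ, ∀ α < κ.ord, x ∉ B α := by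
  have hg := goodCond_gseq κ hreg B hB
  refine ⟨fun β => (gseq κ B (β.1 + 1)).2 β.1, fun α hα hmem => ?_⟩
  have hcyl : (fun β : Idx κ => (gseq κ B (β.1 + 1)).2 β.1) ∈
      cyl κ (gseq κ B α).1 (gseq κ B α).2 := by
    intro β hβ
    have hβκ : β.1 < κ.ord := β.2
    have hsβ : β.1 + 1 < κ.ord := by
      rw [Ordinal.add_one_eq_succ]
      exact (Cardinal.isSuccLimit_ord hreg.aleph0_le).succ_lt hβκ
    have hβ1 : β.1 < β.1 + 1 := by
      rw [Ordinal.add_one_eq_succ]; exact Order.lt_succ _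
    have hβself : β.1 < (gseq κ B (β.1 + 1)).1 := hβ1.trans ((hg _ hsβ).2.1)
    rcases lt_trichotomy (β.1 + 1) α with h | h | h
    · exact (((hg α hα).2.2.1 (β.1 + 1) h).2 β.1 hβself).symm
    · show (gseq κ B (β.1 + 1)).2 β.1 = (gseq κ B α).2 β.1
      rw [h]
    · exact ((hg (β.1 + 1) hsβ).2.2.1 α h).2 β.1 hβ
  have hdisj := (hg α hα).2.2.2
  have : (fun β : Idx κ => (gseq κ B (β.1 + 1)).2 β.1) ∈
      cyl κ (gseq κ B α).1 (gseq κ B α).2 ∩ B α := ⟨hcyl, hmem⟩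
  rw [hdisj] at this
  exact this

lemma not_isKMeager_univ (hreg : κ.IsRegular) : ¬ IsKMeager κ Set.univ := by
  rintro ⟨B, hB, hU⟩
  set B' : Ordinal → Set (GenCantor κ) := fun α =>
    if h : α < κ.ord then B ⟨α, h⟩ else ∅ with hB'def
  have hB' : ∀ α, IsNwd κ (B' α) := by
    intro α
    by_cases h : α < κ.ord
    · simpa [hB'def, h] using hB ⟨α, h⟩
    · simpa [hB'def, h] using isNwd_empty κ
  obtain ⟨x, hx⟩ := exists_avoid κ hreg B' hB'
  have hxU : x ∈ ⋃ i, B i := by rw [← hU]; trivial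
  obtain ⟨i, hi⟩ := Set.mem_iUnion.1 hxU
  have hi2 : (i : Ordinal) < κ.ord := i.2
  refine hx i.1 i.2 ?_
  show x ∈ if h : (i : Ordinal) < κ.ord then B ⟨i.1, h⟩ else ∅
  rw [dif_pos hi2]
  exact hi

/-! ### The covering family -/

/-- `y` agrees with `s` on the `α`-th block `[μ·α, μ·(α+1))`. -/
def matchAt (μ : Cardinal.{0}) (s : Ordinal → Bool) (α : Ordinal) (y : GenCantor κ) : Prop :=
  ∀ β : Idx κ, μ.ord * α ≤ β.1 → β.1 < μ.ord * (α + 1) → y β = s (β.1 - μ.ord * α)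

/-- The set of `y` that never match `s` on a block beyond `δ`. -/
def Nset (μ : Cardinal.{0}) (s : Ordinal → Bool) (δ : Ordinal) : Set (GenCantor κ) :=
  { y | ∀ α, δ ≤ α → α < κ.ord → ¬ matchAt κ μ s α y }

/-- The set of `y` that match `s` on only boundedly many blocks. -/
def Cset (μ : Cardinal.{0}) (s : Ordinal → Bool) : Set (GenCantor κ) :=
  ⋃ δ : Idx κ, Nset κ μ s δ.1

lemma mul_succ_lt_ord (hreg : κ.IsRegular) {μ α : _} (hμκ : μ < κ) (hα : α < κ.ord) :
    μ.ord * (α + 1) < κ.ord := by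
  rw [Cardinal.lt_ord, Ordinal.card_mul, Cardinal.card_ord, Ordinal.add_one_eq_succ,
    Ordinal.card_succ]
  have h1 : α.card + 1 < κ :=
    Cardinal.add_lt_of_lt hreg.aleph0_le (Cardinal.lt_ord.1 hα)
      (one_lt_aleph0.trans_le hreg.aleph0_le)
  exact Cardinal.mul_lt_of_lt hreg.aleph0_le hμκ h1

lemma block_lt (hreg : κ.IsRegular) {μ α γ : _} (hμκ : μ < κ) (hα : α < κ.ord)
    (hγ : γ < μ.ord) : μ.ord * α + γ < κ.ord := by
  refine lt_trans ?_ (mul_succ_lt_ord κ hreg hμκ hα)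
  rw [Ordinal.add_one_eq_succ, Ordinal.mul_succ]
  exact (add_lt_add_iff_left _).2 hγ

lemma isNwd_Nset (hreg : κ.IsRegular) {μ : Cardinal.{0}} (hμκ : μ < κ) (hμ : ℵ₀ ≤ μ)
    (s : Ordinal → Bool) {δ : Ordinal} (hδ : δ < κ.ord) : IsNwd κ (Nset κ μ s δ) := by
  intro δ₀ hδ₀ σ
  set α : Ordinal := max δ δ₀ with hαdef
  have hακ : α < κ.ord := max_lt hδ hδ₀
  have hμ0 : (0 : Ordinal) < μ.ord := by
    rw [Cardinal.lt_ord]; simpa using aleph0_pos.trans_le hμ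
  have hαμ : α ≤ μ.ord * α := Ordinal.le_mul_right α hμ0
  have hδ'lt : μ.ord * (α + 1) < κ.ord := mul_succ_lt_ord κ hreg hμκ hακ
  have hmono : μ.ord * α ≤ μ.ord * (α + 1) := mul_le_mul_right le_self_add _
  refine ⟨μ.ord * (α + 1),
    le_trans (le_trans (le_max_right δ δ₀) hαμ) hmono, hδ'lt,
    fun γ => if γ < μ.ord * α then σ γ else s (γ - μ.ord * α), ?_, ?_⟩
  · intro β hβ
    have : β < μ.ord * α := lt_of_lt_of_le (hβ.trans_le (le_max_right δ δ₀)) hαμ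
    exact if_pos this
  · rw [Set.eq_empty_iff_forall_notMem]
    rintro y ⟨hy, hyN⟩
    refine hyN α (le_max_left _ _) hακ ?_
    intro β hβ1 hβ2
    rw [hy β hβ2]
    exact if_neg (not_lt.2 hβ1)

lemma isKMeager_Cset (hreg : κ.IsRegular) {μ : Cardinal.{0}} (hμκ : μ < κ) (hμ : ℵ₀ ≤ μ)
    (s : Ordinal → Bool) : IsKMeager κ (Cset κ μ s) :=
  ⟨fun δ => Nset κ μ s δ.1, fun δ => isNwd_Nset κ hreg hμκ hμ s δ.2, rfl⟩

/-- Extension of `s : 2^μ` to a function on all ordinals. -/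
def extS (μ : Cardinal.{0}) (s : ↥(Set.Iio μ.ord) → Bool) : Ordinal → Bool :=
  fun γ => if h : γ < μ.ord then s ⟨γ, h⟩ else false

lemma exists_cover (hreg : κ.IsRegular) (hunc : Cardinal.aleph0 < κ)
    {μ : Cardinal.{0}} (hμκ : μ < κ) (hμ : ℵ₀ ≤ μ) (hpow : κ < 2 ^ μ) :
    ∃ J : Set (Set (GenCantor κ)), (∀ A ∈ J, IsKMeager κ A) ∧ ⋃₀ J = Set.univ ∧
      Cardinal.mk J = Cardinal.lift.{1} (Order.succ κ) := by
  classical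
  have hμ0 : (0 : Ordinal) < μ.ord := by
    rw [Cardinal.lt_ord]; simpa using aleph0_pos.trans_le hμ
  have hμ0' : μ.ord ≠ 0 := hμ0.ne'
  -- a set `S` of `κ⁺` many elements of `2^μ`
  have hmkT : Cardinal.lift.{1} (Order.succ κ) ≤ #(↥(Set.Iio μ.ord) → Bool) := by
    have harr : #(↥(Set.Iio μ.ord) → Bool) = 2 ^ Cardinal.lift.{1} μ := by
      rw [Cardinal.mk_arrow, Ordinal.mk_Iio_ordinal, Cardinal.card_ord]
      norm_num
    rw [harr, Cardinal.lift_succ]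
    refine Order.succ_le_of_lt ?_
    rw [← Cardinal.lift_two_power]
    exact Cardinal.lift_lt.2 hpow
  obtain ⟨S, hS⟩ := Cardinal.le_mk_iff_exists_set.1 hmkT
  set F : (↥(Set.Iio μ.ord) → Bool) → Set (GenCantor κ) := fun s => Cset κ μ (extS μ s)
    with hFdef
  -- the canonical point all of whose blocks equal `s`
  set pt : (↥(Set.Iio μ.ord) → Bool) → GenCantor κ :=
    fun s β => s ⟨β.1 % μ.ord, Ordinal.mod_lt β.1 hμ0'⟩ with hptdef
  have hpt_match : ∀ s α, α < κ.ord → matchAt κ μ (extS μ s) α (pt s) := by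
    intro s α hα β hβ1 hβ2
    have hdec : μ.ord * α + (β.1 - μ.ord * α) = β.1 := Ordinal.add_sub_cancel_of_le hβ1
    have hsub : β.1 - μ.ord * α < μ.ord := by
      have h2 : β.1 < μ.ord * α + μ.ord := by
        rwa [Ordinal.add_one_eq_succ, Ordinal.mul_succ] at hβ2
      rw [← hdec] at h2
      exact (add_lt_add_iff_left _).1 h2
    have hmod : β.1 % μ.ord = β.1 - μ.ord * α := by
      conv_lhs => rw [← hdec]
      rw [Ordinal.mul_add_mod_self, Ordinal.mod_eq_of_lt hsub]
    show s ⟨β.1 % μ.ord, Ordinal.mod_lt β.1 hμ0'⟩ = extS μ s (β.1 - μ.ord * α)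
    simp only [extS, dif_pos hsub]
    congr 1
    exact Subtype.ext hmod
  have hpt_notmem : ∀ s, pt s ∉ Cset κ μ (extS μ s) := by
    intro s hmem
    obtain ⟨δ, hδ⟩ := Set.mem_iUnion.1 hmem
    exact hδ δ.1 le_rfl δ.2 (hpt_match s δ.1 δ.2)
  have hmatch_eq : ∀ s t α (y : GenCantor κ), α < κ.ord →
      matchAt κ μ (extS μ s) α y → matchAt κ μ (extS μ t) α y → s = t := by
    intro s t α y hα h1 h2
    funext γ
    have hβκ : μ.ord * α + γ.1 < κ.ord := block_lt κ hreg hμκ hα γ.2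
    have hb1 : μ.ord * α ≤ μ.ord * α + γ.1 := le_self_add
    have hb2 : μ.ord * α + γ.1 < μ.ord * (α + 1) := by
      rw [Ordinal.add_one_eq_succ, Ordinal.mul_succ]
      exact (add_lt_add_iff_left _).2 γ.2
    have e1 := h1 ⟨μ.ord * α + γ.1, hβκ⟩ hb1 hb2
    have e2 := h2 ⟨μ.ord * α + γ.1, hβκ⟩ hb1 hb2
    rw [e1] at e2
    rw [Ordinal.add_sub_cancel] at e2
    have hγ2 : (γ : Ordinal) < μ.ord := γ.2
    simpa only [extS, dif_pos hγ2, Subtype.eta] using e2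
  have hpt_mem : ∀ s t, s ≠ t → pt s ∈ Cset κ μ (extS μ t) := by
    intro s t hst
    refine Set.mem_iUnion.2 ⟨⟨0, ord_pos κ hunc⟩, fun α _ hακ hmatch => ?_⟩
    exact hst (hmatch_eq s t α (pt s) hακ (hpt_match s α hακ) hmatch)
  have hFinj : Function.Injective F := by
    intro s t hFst
    by_contra hst
    have h1 : pt s ∈ F t := hpt_mem s t hst
    rw [← hFst] at h1
    exact hpt_notmem s h1
  refine ⟨F '' S, ?_, ?_, ?_⟩
  · rintro A ⟨s, _, rfl⟩
    exact isKMeager_Cset κ hreg hμκ hμ _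
  · apply Set.eq_univ_of_forall
    intro y
    set bl : Idx κ → (↥(Set.Iio μ.ord) → Bool) :=
      fun α γ => y ⟨μ.ord * α.1 + γ.1, block_lt κ hreg hμκ α.2 γ.2⟩ with hbldef
    have hnotsub : ¬ (S ⊆ Set.range bl) := by
      intro hsub
      have h1 : #S ≤ #(Set.range bl) := Cardinal.mk_le_mk_of_subset hsub
      have h2 : #(Set.range bl) ≤ #(Idx κ) := Cardinal.mk_range_le
      rw [hS] at h1
      rw [mk_Idx] at h2
      have h3 : Cardinal.lift.{1} (Order.succ κ) ≤ Cardinal.lift.{1} κ := h1.trans h2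
      rw [Cardinal.lift_le] at h3
      exact (Order.lt_succ κ).not_ge h3
    obtain ⟨s, hsS, hsnot⟩ := Set.not_subset.1 hnotsub
    refine ⟨F s, ⟨s, hsS, rfl⟩, ?_⟩
    refine Set.mem_iUnion.2 ⟨⟨0, ord_pos κ hunc⟩, fun α _ hακ hmatch => ?_⟩
    refine hsnot ⟨⟨α, hακ⟩, ?_⟩
    funext γ
    have hβκ : μ.ord * α + γ.1 < κ.ord := block_lt κ hreg hμκ hακ γ.2
    have hb1 : μ.ord * α ≤ μ.ord * α + γ.1 := le_self_add
    have hb2 : μ.ord * α + γ.1 < μ.ord * (α + 1) := by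
      rw [Ordinal.add_one_eq_succ, Ordinal.mul_succ]
      exact (add_lt_add_iff_left _).2 γ.2
    have e := hmatch ⟨μ.ord * α + γ.1, hβκ⟩ hb1 hb2
    rw [Ordinal.add_sub_cancel] at e
    have hγ2 : (γ : Ordinal) < μ.ord := γ.2
    show y ⟨μ.ord * α + γ.1, hβκ⟩ = s γ
    simpa only [extS, dif_pos hγ2, Subtype.eta] using e
  · rw [Cardinal.mk_image_eq_of_injOn _ _ hFinj.injOn, hS]

end Helpers

theorem addM_covM_eq_succ_of_twoPowLT_gt (κ : Cardinal.{0})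
    (hreg : κ.IsRegular) (hunc : Cardinal.aleph0 < κ)
    (hpow : ∃ μ < κ, κ < 2 ^ μ) :
    addM κ = Cardinal.lift.{1} (Order.succ κ) ∧
    covM κ = Cardinal.lift.{1} (Order.succ κ) := by
  obtain ⟨μ, hμκ, hpow⟩ := hpow
  have hμinf : ℵ₀ ≤ μ := by
    by_contra h
    push_neg at h
    have h2 : (2 : Cardinal) ^ μ < ℵ₀ :=
      Cardinal.power_lt_aleph0 (Cardinal.nat_lt_aleph0 2) h
    exact (hunc.trans (hpow.trans h2)).false
  obtain ⟨J, hJm, hJu, hJc⟩ := exists_cover κ hreg hunc hμκ hμinf hpow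
  have hnotuniv := not_isKMeager_univ κ hreg
  have hmem_cov : Cardinal.lift.{1} (Order.succ κ) ∈
      { c : Cardinal.{1} | ∃ J : Set (Set (GenCantor κ)),
        (∀ A ∈ J, IsKMeager κ A) ∧ ⋃₀ J = Set.univ ∧ c = #J } :=
    ⟨J, hJm, hJu, hJc.symm⟩
  have hmem_add : Cardinal.lift.{1} (Order.succ κ) ∈
      { c : Cardinal.{1} | ∃ J : Set (Set (GenCantor κ)),
        (∀ A ∈ J, IsKMeager κ A) ∧ ¬ IsKMeager κ (⋃₀ J) ∧ c = #J } :=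
    ⟨J, hJm, by rw [hJu]; exact hnotuniv, hJc.symm⟩
  have hbound : ∀ (c : Cardinal.{1}) (J' : Set (Set (GenCantor κ))),
      (∀ A ∈ J', IsKMeager κ A) → ¬ IsKMeager κ (⋃₀ J') → c = #J' →
      Cardinal.lift.{1} (Order.succ κ) ≤ c := by
    intro c J' hm hnot hc
    by_contra hlt
    push_neg at hlt
    rw [Cardinal.lift_succ, Order.lt_succ_iff] at hlt
    exact hnot (isKMeager_sUnion κ hunc J' hm (hc ▸ hlt))
  constructor
  · refine le_antisymm (csInf_le (OrderBot.bddBelow _) hmem_add) ?_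
    refine le_csInf ⟨_, hmem_add⟩ ?_
    rintro c ⟨J', hm, hnot, hc⟩
    exact hbound c J' hm hnot hc
  · refine le_antisymm (csInf_le (OrderBot.bddBelow _) hmem_cov) ?_
    refine le_csInf ⟨_, hmem_cov⟩ ?_
    rintro c ⟨J', hm, hu, hc⟩
    exact hbound c J' hm (by rw [hu]; exact hnotuniv) hc

end GenCichon
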